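/- arXiv:1408.2662 — 4 statements merged into one kernel-verified Lean document; each statement's English description precedes it below -/
import Mathlib

section
/- For all sufficiently large k and all n ≥ k divisible by k, m(n,k) ≥ 3^{(1 - O(log k / k))n}, i.e., there exists a k-CNF on n variables with at least (c·3^k/k)^{n/k} prime implicants for some constant c > 0. -/
variable {V : Type*}

abbrev Lit (V : Type*) := V × Bool

def evalLit (α : V → Bool) (l : Lit V) : Bool := α l.1 == l.2

abbrev Clause2 (V : Type*) := Lit V × Lit V
abbrev CNF2 (V : Type*) := List (Clause2 V)
abbrev CNF (V : Type*) := List (List (Lit V))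

def sat2 (α : V → Bool) (F : CNF2 V) : Prop :=
  ∀ c ∈ F, evalLit α c.1 = true ∨ evalLit α c.2 = true

def satCNF (α : V → Bool) (F : CNF V) : Prop :=
  ∀ C ∈ F, ∃ l ∈ C, evalLit α l = true

def kCNF (k : ℕ) (F : CNF V) : Prop := ∀ C ∈ F, C.length ≤ k

def extendsR (α : V → Bool) (ρ : V → Option Bool) : Prop :=
  ∀ v b, ρ v = some b → α v = b

def unfix [DecidableEq V] (ρ : V → Option Bool) (v : V) : V → Option Bool :=
  Function.update ρ v none

def implicant2 (ρ : V → Option Bool) (F : CNF2 V) : Prop :=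
  ∀ α, extendsR α ρ → sat2 α F

def primeImplicant2 [DecidableEq V] (ρ : V → Option Bool) (F : CNF2 V) : Prop :=
  implicant2 ρ F ∧ ∀ v, ρ v ≠ none → ¬ implicant2 (unfix ρ v) F

def partialPI [DecidableEq V] (ρ : V → Option Bool) (F : CNF2 V) : Prop :=
  primeImplicant2 ρ F ∧ ∃ v, ρ v = none

def implicantC (ρ : V → Option Bool) (F : CNF V) : Prop :=
  ∀ α, extendsR α ρ → satCNF α F

def primeImplicantC [DecidableEq V] (ρ : V → Option Bool) (F : CNF V) : Prop :=
  implicantC ρ F ∧ ∀ v, ρ v ≠ none → ¬ implicantC (unfix ρ v) F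

def implicantF (ρ : V → Option Bool) (f : (V → Bool) → Bool) : Prop :=
  ∀ α, extendsR α ρ → f α = true

def primeImplicantF [DecidableEq V] (ρ : V → Option Bool) (f : (V → Bool) → Bool) : Prop :=
  implicantF ρ f ∧ ∀ v, ρ v ≠ none → ¬ implicantF (unfix ρ v) f

def negLit (l : Lit V) : Lit V := (l.1, !l.2)

def edge (F : CNF2 V) (u v : Lit V) : Prop :=
  ∃ c ∈ F, (u = negLit c.1 ∧ v = c.2) ∨ (u = negLit c.2 ∧ v = c.1)

def impliesL (F : CNF2 V) : Lit V → Lit V → Prop := Relation.TransGen (edge F)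

def onCycle (F : CNF2 V) (u : Lit V) : Prop := impliesL F u u

def acyclicD (F : CNF2 V) : Prop := ∀ u, ¬ onCycle F u

def looplessD (F : CNF2 V) : Prop := ∀ u, ¬ edge F u u

def litVal (ρ : V → Option Bool) (l : Lit V) : Option Bool := (ρ l.1).map (· == l.2)

def Aset (ρ : V → Option Bool) : Set (Lit V) := {l | litVal ρ l = some false}
def Bset (ρ : V → Option Bool) : Set (Lit V) := {l | litVal ρ l = some true}
def Cset (ρ : V → Option Bool) : Set (Lit V) := {l | litVal ρ l = none}

def Nminus (F : CNF2 V) (S : Set (Lit V)) : Set (Lit V) :=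
  {u | u ∉ S ∧ ∃ v ∈ S, impliesL F u v}
def Nplus (F : CNF2 V) (S : Set (Lit V)) : Set (Lit V) :=
  {v | v ∉ S ∧ ∃ u ∈ S, impliesL F u v}

def Tfml (m : ℕ) : CNF2 (Fin m × Fin 3) :=
  (List.finRange m).flatMap (fun i =>
    [(((i, 0), true), ((i, 1), true)),
     (((i, 1), true), ((i, 2), true)),
     (((i, 0), true), ((i, 2), true))])

def adjVar (F : CNF2 V) (x y : V) : Prop :=
  x ≠ y ∧ ∃ u v : Lit V, u.1 = x ∧ v.1 = y ∧ (impliesL F u v ∨ impliesL F v u)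
namespace KCNFLB

def cntT {m : ℕ} (s : Fin m → Bool) : ℕ := (Finset.univ.filter (fun i => s i = true)).card

def badT (t : ℕ) {m : ℕ} (s : Fin m → Bool) : Prop := cntT s < t ∨ 2*t < cntT s

instance (t m : ℕ) : DecidablePred (badT t (m := m)) := fun _ => by
  unfold badT; exact instDecidableOr

variable {q k n : ℕ} (t : ℕ) (h3 : 3*t ≤ k) (e : Fin q × Fin k ≃ Fin n)

def clauseCM (j : Fin q) (s : Fin (3*t) → Bool) : List (Lit (Fin n)) :=
  (List.finRange (3*t)).map fun i => (e (j, Fin.castLE h3 i), ! s i)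

noncomputable def Fcm : CNF (Fin n) :=
  (List.finRange q).flatMap fun j =>
    ((Finset.univ : Finset (Fin (3*t) → Bool)).filter (badT t)).toList.map (clauseCM t h3 e j)

lemma mem_Fcm {C : List (Lit (Fin n))} :
    C ∈ Fcm t h3 e ↔ ∃ j s, badT t s ∧ C = clauseCM t h3 e j s := by
  simp [Fcm, List.mem_flatMap, List.mem_map, Finset.mem_toList, Finset.mem_filter, eq_comm]

def glueP (P : Fin q → Finset (Fin (3*t)) × Finset (Fin (3*t))) : Fin n → Option Bool :=
  fun u =>
    if h' : ((e.symm u).2 : ℕ) < 3*t then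
      if (⟨(e.symm u).2, h'⟩ : Fin (3*t)) ∈ (P (e.symm u).1).1 then some true
      else if (⟨(e.symm u).2, h'⟩ : Fin (3*t)) ∈ (P (e.symm u).1).2 then some false
      else none
    else none

lemma glueP_apply (P : Fin q → Finset (Fin (3*t)) × Finset (Fin (3*t))) (j : Fin q) (i : Fin (3*t)) :
    glueP t e P (e (j, Fin.castLE h3 i)) =
      if i ∈ (P j).1 then some true else if i ∈ (P j).2 then some false else none := by
  unfold glueP
  rw [Equiv.symm_apply_apply]
  have hlt : ((Fin.castLE h3 i : Fin k) : ℕ) < 3*t := i.isLt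
  rw [dif_pos hlt]
  have : (⟨((Fin.castLE h3 i : Fin k) : ℕ), hlt⟩ : Fin (3*t)) = i := Fin.ext rfl
  rw [this]

lemma glue_implicant (P : Fin q → Finset (Fin (3*t)) × Finset (Fin (3*t)))
    (hP : ∀ j, (P j).1.card = t ∧ (P j).2.card = t ∧ Disjoint (P j).1 (P j).2) :
    implicantC (glueP t e P) (Fcm t h3 e) := by
  intro α hα C hC
  rw [mem_Fcm] at hC
  obtain ⟨j, s, hbad, rfl⟩ := hC
  by_contra hno
  push_neg at hno
  have hs : ∀ i : Fin (3*t), α (e (j, Fin.castLE h3 i)) = s i := by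
    intro i
    have hmem : (e (j, Fin.castLE h3 i), ! s i) ∈ clauseCM t h3 e j s := by
      simp only [clauseCM, List.mem_map]
      exact ⟨i, List.mem_finRange i, rfl⟩
    have := hno _ hmem
    simp only [evalLit] at this
    cases hsi : s i <;> cases hai : α (e (j, Fin.castLE h3 i)) <;> simp_all
  have hA : (P j).1 ⊆ Finset.univ.filter (fun i => s i = true) := by
    intro i hi
    have := hα (e (j, Fin.castLE h3 i)) true (by rw [glueP_apply]; simp [hi])
    simp only [Finset.mem_filter, Finset.mem_univ, true_and, ← hs i]
    exact this
  have hBc : Finset.univ.filter (fun i => s i = true) ⊆ ((P j).2)ᶜ := by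
    intro i hi
    simp only [Finset.mem_filter, Finset.mem_univ, true_and] at hi
    rw [Finset.mem_compl]
    intro hmem
    have hnot1 : i ∉ (P j).1 := Finset.disjoint_right.1 (hP j).2.2 hmem
    have := hα (e (j, Fin.castLE h3 i)) false (by rw [glueP_apply, if_neg hnot1, if_pos hmem])
    rw [hs i] at this
    simp [this] at hi
  have h1 : t ≤ cntT s := by
    have := Finset.card_le_card hA
    rwa [(hP j).1] at this
  have h2 : cntT s ≤ 3*t - t := by
    have := Finset.card_le_card hBc
    rwa [Finset.card_compl, Fintype.card_fin, (hP j).2.1] at this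
  rcases hbad with h | h <;> omega

lemma glue_minimal (ht : 1 ≤ t) (P : Fin q → Finset (Fin (3*t)) × Finset (Fin (3*t)))
    (hP : ∀ j, (P j).1.card = t ∧ (P j).2.card = t ∧ Disjoint (P j).1 (P j).2)
    (v : Fin n) (hv : glueP t e P v ≠ none) :
    ¬ implicantC (unfix (glueP t e P) v) (Fcm t h3 e) := by
  intro himp
  set ρ := glueP t e P with hρ
  set j := (e.symm v).1 with hj
  by_cases h' : ((e.symm v).2 : ℕ) < 3*t
  swap
  · apply hv; simp [hρ, glueP, h']
  set i₀ : Fin (3*t) := ⟨(e.symm v).2, h'⟩ with hi₀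
  have hev : ∀ i : Fin (3*t), e (j, Fin.castLE h3 i) = v ↔ i = i₀ := by
    intro i
    constructor
    · intro hh
      have : (j, Fin.castLE h3 i) = e.symm v := by rw [← hh, Equiv.symm_apply_apply]
      have h2 : (Fin.castLE h3 i : Fin k) = (e.symm v).2 := by rw [← this]
      apply Fin.ext
      simpa [Fin.ext_iff] using h2
    · intro hh
      subst hh
      have h2 : (Fin.castLE h3 i₀ : Fin k) = (e.symm v).2 := Fin.ext rfl
      rw [h2, hj]
      exact e.apply_symm_apply v
  -- value of ρ at v
  have hρv : ρ v = if i₀ ∈ (P j).1 then some true else if i₀ ∈ (P j).2 then some false else none := by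
    rw [← glueP_apply t h3 e P j i₀, (hev i₀).2 rfl]
  -- case on b
  have hcases : (i₀ ∈ (P j).1 ∧ ρ v = some true) ∨ (i₀ ∉ (P j).1 ∧ i₀ ∈ (P j).2 ∧ ρ v = some false) := by
    by_cases hA : i₀ ∈ (P j).1
    · exact Or.inl ⟨hA, by rw [hρv, if_pos hA]⟩
    · by_cases hB : i₀ ∈ (P j).2
      · exact Or.inr ⟨hA, hB, by rw [hρv, if_neg hA, if_pos hB]⟩
      · exact absurd (by rw [hρv, if_neg hA, if_neg hB]) hv
  have final : ∀ b : Bool, ρ v = some b → False := by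
    intro b hb
    set α : Fin n → Bool := fun u => (unfix ρ v u).getD (!b) with hα
    have hext : extendsR α (unfix ρ v) := by
      intro u c hc; simp [hα, hc]
    set s : Fin (3*t) → Bool := fun i => α (e (j, Fin.castLE h3 i)) with hs
    have hαv : α v = !b := by simp [hα, unfix]
    have hαval : ∀ i : Fin (3*t), i ≠ i₀ →
        α (e (j, Fin.castLE h3 i)) = ((ρ (e (j, Fin.castLE h3 i))).getD (!b)) := by
      intro i hi
      have : e (j, Fin.castLE h3 i) ≠ v := fun hh => hi ((hev i).1 hh)
      simp [hα, unfix, Function.update_of_ne this]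
    have hfilter : Finset.univ.filter (fun i => s i = true)
        = if b then (P j).1.erase i₀ else (((P j).2.erase i₀))ᶜ := by
      ext i
      simp only [Finset.mem_filter, Finset.mem_univ, true_and, hs]
      by_cases hii : i = i₀
      · rw [hii, (hev i₀).2 rfl, hαv]
        rcases b with _ | _
        · simp [Finset.mem_compl]
        · simp
      · rw [hαval i hii, hρ, glueP_apply]
        by_cases hA : i ∈ (P j).1
        · have hBn : i ∉ (P j).2 := Finset.disjoint_left.1 (hP j).2.2 hA
          rcases b with _ | _ <;> simp [hA, hBn, hii, Finset.mem_compl]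
        · by_cases hB : i ∈ (P j).2
          · rcases b with _ | _ <;> simp [hA, hB, hii, Finset.mem_compl]
          · rcases b with _ | _ <;> simp [hA, hB, hii, Finset.mem_compl]
    have hbad : badT t s := by
      unfold badT cntT
      rcases hbb : b with _ | _
      · rw [hbb] at hfilter
        rw [hfilter]
        right
        rw [if_neg (by simp), Finset.card_compl, Fintype.card_fin]
        rcases hcases with ⟨_, hc⟩ | ⟨_, hB, _⟩
        · rw [hb, hbb] at hc; exact absurd hc (by simp)
        · rw [Finset.card_erase_of_mem hB, (hP j).2.1]
          omega
      · rw [hbb] at hfilter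
        rw [hfilter]
        left
        rw [if_pos rfl]
        rcases hcases with ⟨hA, _⟩ | ⟨_, _, hc⟩
        · rw [Finset.card_erase_of_mem hA, (hP j).1]
          omega
        · rw [hb, hbb] at hc; exact absurd hc (by simp)
    have hsat := himp α hext
    obtain ⟨l, hl, hev'⟩ := hsat (clauseCM t h3 e j s) ((mem_Fcm t h3 e).2 ⟨j, s, hbad, rfl⟩)
    simp only [clauseCM, List.mem_map] at hl
    obtain ⟨i, _, rfl⟩ := hl
    simp only [evalLit, beq_iff_eq] at hev'
    rw [show α (e (j, Fin.castLE h3 i)) = s i from rfl] at hev'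
    cases hsi : s i <;> rw [hsi] at hev' <;> simp at hev'
  rcases hcases with ⟨_, hb⟩ | ⟨_, _, hb⟩
  · exact final true hb
  · exact final false hb

def Dblock (t : ℕ) : Finset (Finset (Fin (3*t)) × Finset (Fin (3*t))) :=
  (((Finset.univ : Finset (Fin (3*t))).powersetCard t).sigma (fun A => Aᶜ.powersetCard t)).image
    (fun x => (x.1, x.2))

lemma mem_Dblock {t : ℕ} {p : Finset (Fin (3*t)) × Finset (Fin (3*t))} :
    p ∈ Dblock t ↔ p.1.card = t ∧ p.2.card = t ∧ Disjoint p.1 p.2 := by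
  simp only [Dblock, Finset.mem_image, Finset.mem_sigma, Finset.mem_powersetCard]
  constructor
  · rintro ⟨⟨A, B⟩, ⟨⟨-, hA⟩, hBc, hB⟩, rfl⟩
    refine ⟨hA, hB, Finset.disjoint_left.2 fun a ha hb => ?_⟩
    have := hBc hb
    simp only [Finset.mem_compl] at this
    exact this ha
  · rintro ⟨h1, h2, h3⟩
    exact ⟨⟨p.1, p.2⟩, ⟨⟨Finset.subset_univ _, h1⟩,
      fun a ha => Finset.mem_compl.2 (Finset.disjoint_right.1 h3 ha), h2⟩, rfl⟩

lemma card_Dblock (t : ℕ) : (Dblock t).card = (3*t).choose t * (2*t).choose t := by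
  rw [Dblock, Finset.card_image_of_injective _ (by
    rintro ⟨a, b⟩ ⟨a', b'⟩ h
    simp only [Prod.mk.injEq] at h
    obtain ⟨rfl, rfl⟩ := h
    rfl), Finset.card_sigma]
  have : ∀ A ∈ (Finset.univ : Finset (Fin (3*t))).powersetCard t,
      (Aᶜ.powersetCard t).card = (2*t).choose t := by
    intro A hA
    rw [Finset.mem_powersetCard] at hA
    rw [Finset.card_powersetCard, Finset.card_compl, Fintype.card_fin, hA.2,
      show 3*t - t = 2*t by omega]
  rw [Finset.sum_congr rfl this, Finset.sum_const, Finset.card_powersetCard,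
    Finset.card_univ, Fintype.card_fin, smul_eq_mul]

def Dset (q t : ℕ) : Finset (Fin q → Finset (Fin (3*t)) × Finset (Fin (3*t))) :=
  Fintype.piFinset (fun _ => Dblock t)

lemma card_Dset (q t : ℕ) : (Dset q t).card = ((3*t).choose t * (2*t).choose t)^q := by
  rw [Dset, Fintype.card_piFinset]
  simp [card_Dblock]

include h3 in
lemma glueP_injOn : Set.InjOn (glueP t e) (Dset q t) := by
  intro P hP P' hP' hglue
  simp only [Finset.coe_sort_coe, Finset.mem_coe, Dset, Fintype.mem_piFinset] at hP hP'
  funext j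
  have h1 : (P j).1 = (P' j).1 := by
    ext i
    have := congrFun hglue (e (j, Fin.castLE h3 i))
    rw [glueP_apply, glueP_apply] at this
    constructor
    · intro hi
      rw [if_pos hi] at this
      by_contra hi'
      rw [if_neg hi'] at this
      split at this <;> simp_all
    · intro hi
      rw [if_pos hi] at this
      by_contra hi'
      rw [if_neg hi'] at this
      split at this <;> simp_all
  have h2 : (P j).2 = (P' j).2 := by
    have d1 := (mem_Dblock.1 (hP j)).2.2
    have d2 := (mem_Dblock.1 (hP' j)).2.2
    ext i
    have := congrFun hglue (e (j, Fin.castLE h3 i))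
    rw [glueP_apply, glueP_apply] at this
    constructor
    · intro hi
      have hn1 : i ∉ (P j).1 := Finset.disjoint_right.1 d1 hi
      rw [if_neg hn1, if_pos hi, ← h1, if_neg hn1] at this
      by_contra hi'
      rw [if_neg hi'] at this
      simp at this
    · intro hi
      have hn1 : i ∉ (P' j).1 := Finset.disjoint_right.1 d2 hi
      rw [h1, if_neg hn1, if_pos hi] at this
      rw [if_neg hn1] at this
      by_contra hi'
      rw [if_neg hi'] at this
      simp at this
  exact Prod.ext h1 h2

lemma Mfact (m : ℕ) : ((3*m).choose m * (2*m).choose m) * (m.factorial)^3 = (3*m).factorial := by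
  have h1 := Nat.choose_mul_factorial_mul_factorial (show m ≤ 3*m by omega)
  have h2 := Nat.choose_mul_factorial_mul_factorial (show m ≤ 2*m by omega)
  rw [show 3*m - m = 2*m by omega] at h1
  rw [show 2*m - m = m by omega] at h2
  calc ((3*m).choose m * (2*m).choose m) * (m.factorial)^3
      = (3*m).choose m * m.factorial * ((2*m).choose m * m.factorial * m.factorial) := by ring
    _ = (3*m).choose m * m.factorial * (2*m).factorial := by rw [h2]
    _ = (3*m).factorial := h1

lemma numeric : ∀ m : ℕ, 1 ≤ m → 27^m ≤ 5 * m * ((3*m).choose m * (2*m).choose m) := by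
  intro m hm
  induction m, hm using Nat.le_induction with
  | base => decide
  | succ m hm IH =>
    have hfac3 : (3*(m+1)).factorial = (3*m+3) * ((3*m+2) * ((3*m+1) * (3*m).factorial)) := by
      rw [show 3*(m+1) = 3*m+1+1+1 by ring, Nat.factorial_succ, Nat.factorial_succ,
        Nat.factorial_succ]
    have key : 27 * m * ((3*m).choose m * (2*m).choose m)
        ≤ (m+1) * ((3*(m+1)).choose (m+1) * (2*(m+1)).choose (m+1)) := by
      refine Nat.le_of_mul_le_mul_right ?_ (show 0 < ((m+1).factorial)^3 by positivity)
      calc 27 * m * ((3*m).choose m * (2*m).choose m) * ((m+1).factorial)^3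
          = 27 * m * (m+1)^3 * (((3*m).choose m * (2*m).choose m) * (m.factorial)^3) := by
            rw [Nat.factorial_succ]; ring
        _ = 27 * m * (m+1)^3 * (3*m).factorial := by rw [Mfact]
        _ ≤ ((m+1) * ((3*m+3) * ((3*m+2) * (3*m+1)))) * (3*m).factorial := by
            refine Nat.mul_le_mul_right _ ?_
            have hident : (m+1) * ((3*m+3) * ((3*m+2) * (3*m+1)))
                = 27 * m * (m+1)^3 + 6*(m+1)^2 := by ring
            rw [hident]
            exact Nat.le_add_right _ _
        _ = (m+1) * (3*(m+1)).factorial := by rw [hfac3]; ring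
        _ = (m+1) * (((3*(m+1)).choose (m+1) * (2*(m+1)).choose (m+1)) * ((m+1).factorial)^3) := by
            rw [Mfact]
        _ = (m+1) * ((3*(m+1)).choose (m+1) * (2*(m+1)).choose (m+1)) * ((m+1).factorial)^3 := by
            ring
    calc 27^(m+1) = 27 * 27^m := by ring
      _ ≤ 27 * (5 * m * ((3*m).choose m * (2*m).choose m)) := Nat.mul_le_mul_left _ IH
      _ = 5 * (27 * m * ((3*m).choose m * (2*m).choose m)) := by ring
      _ ≤ 5 * ((m+1) * ((3*(m+1)).choose (m+1) * (2*(m+1)).choose (m+1))) :=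
          Nat.mul_le_mul_left _ key
      _ = 5 * (m+1) * ((3*(m+1)).choose (m+1) * (2*(m+1)).choose (m+1)) := by ring

include h3 in
lemma Fcm_kCNF : kCNF k (Fcm t h3 e) := by
  intro C hC
  rw [mem_Fcm] at hC
  obtain ⟨j, s, _, rfl⟩ := hC
  simpa [clauseCM] using h3

end KCNFLB

theorem kcnf_lower_bound :
    ∃ k₀ : ℕ, ∃ c : ℝ, 0 < c ∧ ∀ k, k₀ ≤ k → ∀ n, k ≤ n → k ∣ n →
      ∃ F : CNF (Fin n), kCNF k F ∧
        (c * 3 ^ k / (k : ℝ)) ^ (n / k) ≤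
          ({ρ : Fin n → Option Bool | primeImplicantC ρ F}.ncard : ℝ) := by
  refine ⟨3, 1/45, by norm_num, ?_⟩
  intro k hk n hkn hdvd
  set t := k / 3 with htdef
  have ht1 : 1 ≤ t := by omega
  have h3 : 3 * t ≤ k := by omega
  set q := n / k with hqdef
  have hn : q * k = n := Nat.div_mul_cancel hdvd
  let e : Fin q × Fin k ≃ Fin n := finProdFinEquiv.trans (finCongr hn)
  refine ⟨KCNFLB.Fcm t h3 e, KCNFLB.Fcm_kCNF t h3 e, ?_⟩
  set M := (3*t).choose t * (2*t).choose t with hM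
  have hprops : ∀ P ∈ KCNFLB.Dset q t, ∀ j,
      ((P j).1.card = t ∧ (P j).2.card = t ∧ Disjoint (P j).1 (P j).2) := by
    intro P hP j
    exact KCNFLB.mem_Dblock.1 (Fintype.mem_piFinset.1 hP j)
  have hsub : ↑((KCNFLB.Dset q t).image (KCNFLB.glueP t e)) ⊆
      {ρ : Fin n → Option Bool | primeImplicantC ρ (KCNFLB.Fcm t h3 e)} := by
    intro ρ hρ
    simp only [Finset.coe_image, Set.mem_image, Finset.mem_coe] at hρ
    obtain ⟨P, hP, rfl⟩ := hρ
    exact ⟨KCNFLB.glue_implicant t h3 e P (hprops P hP),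
      fun v hv => KCNFLB.glue_minimal t h3 e ht1 P (hprops P hP) v hv⟩
  have hcard : ((KCNFLB.Dset q t).image (KCNFLB.glueP t e)).card = M^q := by
    rw [Finset.card_image_of_injOn (KCNFLB.glueP_injOn t h3 e), KCNFLB.card_Dset]
  have hnc : (M^q : ℕ) ≤
      {ρ : Fin n → Option Bool | primeImplicantC ρ (KCNFLB.Fcm t h3 e)}.ncard := by
    rw [← hcard, ← Set.ncard_coe_finset]
    exact Set.ncard_le_ncard hsub (Set.toFinite _)
  have hNat : 3^k ≤ 45 * k * M := by
    have h27 := KCNFLB.numeric t ht1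
    have hsplit : (3:ℕ)^k ≤ 9 * 27^t := by
      have e1 : (3:ℕ)^k = 27^t * 3^(k - 3*t) := by
        rw [show (27:ℕ) = 3^3 by norm_num, ← pow_mul, ← pow_add]
        congr 1
        omega
      have e2 : (3:ℕ)^(k - 3*t) ≤ 9 := by
        calc (3:ℕ)^(k-3*t) ≤ 3^2 := Nat.pow_le_pow_right (by norm_num) (by omega)
          _ = 9 := by norm_num
      calc (3:ℕ)^k = 27^t * 3^(k-3*t) := e1
        _ ≤ 27^t * 9 := Nat.mul_le_mul_left _ e2
        _ = 9 * 27^t := by ring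
    calc (3:ℕ)^k ≤ 9 * 27^t := hsplit
      _ ≤ 9 * (5 * t * M) := Nat.mul_le_mul_left _ h27
      _ = 45 * t * M := by ring
      _ ≤ 45 * k * M := by
          have htk : t ≤ k := by omega
          exact Nat.mul_le_mul_right _ (Nat.mul_le_mul_left _ htk)
  have hkpos : (0:ℝ) < (k:ℝ) := by
    have : 0 < k := by omega
    exact_mod_cast this
  have hbase : (1/45 : ℝ) * 3^k / k ≤ (M : ℝ) := by
    rw [div_le_iff₀ hkpos]
    have hcast : ((3:ℝ))^k ≤ 45 * k * M := by exact_mod_cast hNat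
    nlinarith [hcast]
  calc ((1/45 : ℝ) * 3^k / k)^(n/k) ≤ (M:ℝ)^q :=
        pow_le_pow_left₀ (by positivity) hbase q
    _ = ((M^q : ℕ) : ℝ) := by push_cast; ring
    _ ≤ _ := Nat.cast_le.2 hnc
end

section
/- If F = F₁ ∧ F₂ where F₁ and F₂ are Boolean functions over disjoint variable sets, then the prime implicants of F are exactly the concatenations of a prime implicant of F₁ with a prime implicant of F₂; in particular the number of prime implicants of F equals the product of the numbers for F₁ and F₂. -/
variable {V : Type*}

section Aux

variable {V₁ V₂ : Type*} [DecidableEq V₁] [DecidableEq V₂]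

private def dfltExt {V : Type*} (ρ : V → Option Bool) : V → Bool := fun v => (ρ v).getD false

private lemma extends_dflt {V : Type*} (ρ : V → Option Bool) : extendsR (dfltExt ρ) ρ := by
  intro v b h; simp [dfltExt, h]

private lemma extends_elim {ρ : V₁ ⊕ V₂ → Option Bool} {α₁ : V₁ → Bool} {α₂ : V₂ → Bool}
    (h₁ : extendsR α₁ (fun v => ρ (Sum.inl v))) (h₂ : extendsR α₂ (fun v => ρ (Sum.inr v))) :
    extendsR (Sum.elim α₁ α₂) ρ := by
  intro v b h
  cases v with
  | inl w => exact h₁ w b h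
  | inr w => exact h₂ w b h

private lemma extends_inl {ρ : V₁ ⊕ V₂ → Option Bool} {α : V₁ ⊕ V₂ → Bool}
    (h : extendsR α ρ) :
    extendsR (fun v => α (Sum.inl v)) (fun v => ρ (Sum.inl v)) := fun v b hv => h _ b hv

private lemma extends_inr {ρ : V₁ ⊕ V₂ → Option Bool} {α : V₁ ⊕ V₂ → Bool}
    (h : extendsR α ρ) :
    extendsR (fun v => α (Sum.inr v)) (fun v => ρ (Sum.inr v)) := fun v b hv => h _ b hv

private lemma impl_iff (f₁ : (V₁ → Bool) → Bool) (f₂ : (V₂ → Bool) → Bool)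
    (ρ : V₁ ⊕ V₂ → Option Bool) :
    implicantF ρ (fun α => f₁ (fun v => α (Sum.inl v)) && f₂ (fun v => α (Sum.inr v))) ↔
    implicantF (fun v => ρ (Sum.inl v)) f₁ ∧ implicantF (fun v => ρ (Sum.inr v)) f₂ := by
  constructor
  · intro h
    constructor
    · intro α₁ h₁
      have := h (Sum.elim α₁ (dfltExt fun v => ρ (Sum.inr v)))
        (extends_elim h₁ (extends_dflt _))
      rw [Bool.and_eq_true] at this; exact this.1
    · intro α₂ h₂
      have := h (Sum.elim (dfltExt fun v => ρ (Sum.inl v)) α₂)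
        (extends_elim (extends_dflt _) h₂)
      rw [Bool.and_eq_true] at this; exact this.2
  · rintro ⟨h₁, h₂⟩ α hα
    rw [Bool.and_eq_true]
    exact ⟨h₁ _ (extends_inl hα), h₂ _ (extends_inr hα)⟩

private lemma unfix_inl_inl (ρ : V₁ ⊕ V₂ → Option Bool) (w : V₁) :
    (fun v => unfix ρ (Sum.inl w) (Sum.inl v)) = unfix (fun v => ρ (Sum.inl v)) w := by
  funext v; simp [unfix, Function.update_apply]

private lemma unfix_inl_inr (ρ : V₁ ⊕ V₂ → Option Bool) (w : V₁) :
    (fun v => unfix ρ (Sum.inl w) (Sum.inr v)) = fun v => ρ (Sum.inr v) := by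
  funext v; simp [unfix, Function.update_apply]

private lemma unfix_inr_inl (ρ : V₁ ⊕ V₂ → Option Bool) (w : V₂) :
    (fun v => unfix ρ (Sum.inr w) (Sum.inl v)) = fun v => ρ (Sum.inl v) := by
  funext v; simp [unfix, Function.update_apply]

private lemma unfix_inr_inr (ρ : V₁ ⊕ V₂ → Option Bool) (w : V₂) :
    (fun v => unfix ρ (Sum.inr w) (Sum.inr v)) = unfix (fun v => ρ (Sum.inr v)) w := by
  funext v; simp [unfix, Function.update_apply]

private lemma pi_iff (f₁ : (V₁ → Bool) → Bool) (f₂ : (V₂ → Bool) → Bool)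
    (ρ : V₁ ⊕ V₂ → Option Bool) :
    primeImplicantF ρ
      (fun α => f₁ (fun v => α (Sum.inl v)) && f₂ (fun v => α (Sum.inr v))) ↔
    (primeImplicantF (fun v => ρ (Sum.inl v)) f₁ ∧
     primeImplicantF (fun v => ρ (Sum.inr v)) f₂) := by
  constructor
  · rintro ⟨h, hmin⟩
    obtain ⟨h₁, h₂⟩ := (impl_iff f₁ f₂ ρ).1 h
    refine ⟨⟨h₁, ?_⟩, ⟨h₂, ?_⟩⟩
    · intro w hw hcon
      apply hmin (Sum.inl w) hw
      rw [impl_iff]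
      rw [unfix_inl_inl, unfix_inl_inr]
      exact ⟨hcon, h₂⟩
    · intro w hw hcon
      apply hmin (Sum.inr w) hw
      rw [impl_iff]
      rw [unfix_inr_inl, unfix_inr_inr]
      exact ⟨h₁, hcon⟩
  · rintro ⟨⟨h₁, hmin₁⟩, ⟨h₂, hmin₂⟩⟩
    refine ⟨(impl_iff f₁ f₂ ρ).2 ⟨h₁, h₂⟩, ?_⟩
    intro v hv hcon
    rw [impl_iff] at hcon
    cases v with
    | inl w =>
      rw [unfix_inl_inl, unfix_inl_inr] at hcon
      exact hmin₁ w hv hcon.1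
    | inr w =>
      rw [unfix_inr_inl, unfix_inr_inr] at hcon
      exact hmin₂ w hv hcon.2

end Aux

theorem prime_implicants_of_conjunction {V₁ V₂ : Type*} [DecidableEq V₁] [DecidableEq V₂]
    (f₁ : (V₁ → Bool) → Bool) (f₂ : (V₂ → Bool) → Bool) :
    (∀ ρ : V₁ ⊕ V₂ → Option Bool,
       primeImplicantF ρ
         (fun α => f₁ (fun v => α (Sum.inl v)) && f₂ (fun v => α (Sum.inr v))) ↔
       (primeImplicantF (fun v => ρ (Sum.inl v)) f₁ ∧
        primeImplicantF (fun v => ρ (Sum.inr v)) f₂)) ∧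
    {ρ : V₁ ⊕ V₂ → Option Bool | primeImplicantF ρ
        (fun α => f₁ (fun v => α (Sum.inl v)) && f₂ (fun v => α (Sum.inr v)))}.ncard =
      {ρ₁ : V₁ → Option Bool | primeImplicantF ρ₁ f₁}.ncard *
      {ρ₂ : V₂ → Option Bool | primeImplicantF ρ₂ f₂}.ncard := by
  refine ⟨pi_iff f₁ f₂, ?_⟩
  have e : {ρ : V₁ ⊕ V₂ → Option Bool | primeImplicantF ρ
        (fun α => f₁ (fun v => α (Sum.inl v)) && f₂ (fun v => α (Sum.inr v)))} ≃
      {ρ₁ : V₁ → Option Bool | primeImplicantF ρ₁ f₁} ×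
      {ρ₂ : V₂ → Option Bool | primeImplicantF ρ₂ f₂} :=
    { toFun := fun ρ =>
        (⟨fun v => ρ.1 (Sum.inl v), ((pi_iff f₁ f₂ ρ.1).1 ρ.2).1⟩,
         ⟨fun v => ρ.1 (Sum.inr v), ((pi_iff f₁ f₂ ρ.1).1 ρ.2).2⟩),
      invFun := fun p =>
        ⟨Sum.elim p.1.1 p.2.1, (pi_iff f₁ f₂ _).2 ⟨p.1.2, p.2.2⟩⟩,
      left_inv := fun ρ => by
        ext v; cases v <;> rfl,
      right_inv := fun p => by
        ext v <;> rfl }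
  rw [← Nat.card_coe_set_eq, ← Nat.card_coe_set_eq, ← Nat.card_coe_set_eq,
    ← Nat.card_prod]
  exact Nat.card_congr e
end

section
/- For every n divisible by 3, m(n,2) ≥ 3^{n/3}, where m(n,2) is the maximum number of prime implicants over 2-CNF formulas on n variables. -/
variable {V : Type*}

def idx (m : ℕ) (i : Fin m) (a : Fin 3) : Fin (3*m) :=
  ⟨3*i+a, by have := i.isLt; have := a.isLt; omega⟩

def blockF (m : ℕ) : CNF2 (Fin (3*m)) :=
  (List.finRange m).flatMap (fun i =>
    [((idx m i 0, true), (idx m i 1, true)),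
     ((idx m i 1, true), (idx m i 2, true)),
     ((idx m i 0, true), (idx m i 2, true))])

def rhoOf {m : ℕ} (c : Fin m → Fin 3) : Fin (3*m) → Option Bool :=
  fun v => if (v:ℕ) % 3 = c ⟨(v:ℕ)/3, by have := v.isLt; omega⟩ then none else some true

lemma rhoOf_idx {m : ℕ} (c : Fin m → Fin 3) (i : Fin m) (a : Fin 3) :
    rhoOf c (idx m i a) = if a = c i then none else some true := by
  have h2 : ((3*(i:ℕ)+(a:ℕ))/3) = (i:ℕ) := by have := a.isLt; omega
  have h3 : (⟨(3*(i:ℕ)+(a:ℕ))/3, by have := i.isLt; have := a.isLt; omega⟩ : Fin m) = i :=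
    Fin.ext h2
  simp only [rhoOf, idx, h3]
  have h1 : ((3*(i:ℕ)+(a:ℕ)) % 3) = (a:ℕ) := by have := a.isLt; omega
  rw [h1]
  by_cases h : a = c i
  · simp [h]
  · rw [if_neg h, if_neg (fun hh => h (Fin.ext hh))]

lemma key_true {m : ℕ} (c : Fin m → Fin 3) (α : Fin (3*m) → Bool)
    (hα : extendsR α (rhoOf c)) (i : Fin m) (a : Fin 3) (ha : a ≠ c i) :
    evalLit α (idx m i a, true) = true := by
  have h : rhoOf c (idx m i a) = some true := by rw [rhoOf_idx, if_neg ha]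
  have := hα _ _ h
  simp [evalLit, this]

lemma rhoOf_implicant {m : ℕ} (c : Fin m → Fin 3) :
    implicant2 (rhoOf c) (blockF m) := by
  intro α hα cl hcl
  simp only [blockF, List.mem_flatMap, List.mem_finRange, List.mem_cons,
    List.mem_singleton, true_and] at hcl
  obtain ⟨i, hcl | hcl | hcl | hcl⟩ := hcl
  · subst hcl
    rcases eq_or_ne (c i) 0 with h | h
    · exact Or.inr (key_true c α hα i 1 (by rw [h]; decide))
    · exact Or.inl (key_true c α hα i 0 (Ne.symm h))
  · subst hcl
    rcases eq_or_ne (c i) 1 with h | h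
    · exact Or.inr (key_true c α hα i 2 (by rw [h]; decide))
    · exact Or.inl (key_true c α hα i 1 (Ne.symm h))
  · subst hcl
    rcases eq_or_ne (c i) 0 with h | h
    · exact Or.inr (key_true c α hα i 2 (by rw [h]; decide))
    · exact Or.inl (key_true c α hα i 0 (Ne.symm h))
  · exact absurd hcl List.not_mem_nil

lemma idx_inj {m : ℕ} {i i' : Fin m} {a a' : Fin 3}
    (h : idx m i a = idx m i' a') : i = i' ∧ a = a' := by
  have hv : 3*(i:ℕ)+(a:ℕ) = 3*(i':ℕ)+(a':ℕ) := congrArg Fin.val h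
  have := a.isLt; have := a'.isLt
  constructor
  · exact Fin.ext (by omega)
  · exact Fin.ext (by omega)

lemma rhoOf_prime {m : ℕ} (c : Fin m → Fin 3) :
    primeImplicant2 (rhoOf c) (blockF m) := by
  refine ⟨rhoOf_implicant c, ?_⟩
  intro v hv himp
  have hvlt := v.isLt
  set i : Fin m := ⟨(v:ℕ)/3, by omega⟩ with hi
  set a : Fin 3 := ⟨(v:ℕ)%3, by omega⟩ with ha
  have hva : v = idx m i a := Fin.ext (by simp [idx, hi, ha]; omega)
  have hane : a ≠ c i := by
    intro hEq
    apply hv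
    rw [hva, rhoOf_idx, if_pos hEq]
  set j : Fin 3 := c i with hj
  set α : Fin (3*m) → Bool :=
    fun w => decide (w ≠ idx m i a ∧ w ≠ idx m i j) with hαdef
  have hαa : α (idx m i a) = false := by simp [hαdef]
  have hαj : α (idx m i j) = false := by simp [hαdef]
  have hext : extendsR α (unfix (rhoOf c) v) := by
    intro w b hw
    unfold unfix at hw
    rcases eq_or_ne w v with rfl | hwv
    · rw [Function.update_self] at hw; exact absurd hw (by simp)
    · rw [Function.update_of_ne hwv] at hw
      have hbt : b = true := by
        by_contra hb
        unfold rhoOf at hw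
        split at hw
        · exact absurd hw (by simp)
        · exact hb (Option.some.inj hw).symm
      subst hbt
      have hwa : w ≠ idx m i a := by rw [← hva]; exact hwv
      have hwj : w ≠ idx m i j := by
        intro hEq
        rw [hEq, rhoOf_idx, if_pos rfl] at hw
        exact absurd hw (by simp)
      simp [hαdef, hwa, hwj]
  have hsat := himp α hext
  have hmem : ((idx m i a, true), (idx m i j, true)) ∈ blockF m ∨
      ((idx m i j, true), (idx m i a, true)) ∈ blockF m := by
    have hmem3 : ∀ p q : Fin 3,
        ((idx m i p, true), (idx m i q, true)) ∈ [((idx m i 0, true), (idx m i 1, true)),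
          ((idx m i 1, true), (idx m i 2, true)),
          ((idx m i 0, true), (idx m i 2, true))] →
        ((idx m i p, true), (idx m i q, true)) ∈ blockF m := by
      intro p q hin
      simp only [blockF, List.mem_flatMap, List.mem_finRange, true_and]
      exact ⟨i, hin⟩
    clear_value α j a
    fin_cases a <;> fin_cases j
    · exact absurd rfl hane
    · exact Or.inl (hmem3 0 1 (by simp))
    · exact Or.inl (hmem3 0 2 (by simp))
    · exact Or.inr (hmem3 0 1 (by simp))
    · exact absurd rfl hane
    · exact Or.inl (hmem3 1 2 (by simp))
    · exact Or.inr (hmem3 0 2 (by simp))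
    · exact Or.inr (hmem3 1 2 (by simp))
    · exact absurd rfl hane
  rcases hmem with hmem | hmem
  · rcases hsat _ hmem with h | h
    · simp [evalLit, hαa] at h
    · simp [evalLit, hαj] at h
  · rcases hsat _ hmem with h | h
    · simp [evalLit, hαj] at h
    · simp [evalLit, hαa] at h

lemma rhoOf_inj {m : ℕ} : Function.Injective (rhoOf (m := m)) := by
  intro c c' h
  funext i
  have h1 := congrFun h (idx m i (c i))
  rw [rhoOf_idx, rhoOf_idx, if_pos rfl] at h1
  by_contra hne
  rw [if_neg (fun hh => hne hh)] at h1
  exact absurd h1 (by simp)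

theorem m_n_2_lower_bound : ∀ n : ℕ, 3 ∣ n →
    ∃ F : CNF2 (Fin n),
      3 ^ (n / 3) ≤ {ρ : Fin n → Option Bool | primeImplicant2 ρ F}.ncard := by
  rintro n ⟨m, rfl⟩
  refine ⟨blockF m, ?_⟩
  have hdiv : 3 * m / 3 = m := Nat.mul_div_cancel_left m (by norm_num)
  rw [hdiv]
  have hsub : Set.range (rhoOf (m := m)) ⊆
      {ρ : Fin (3*m) → Option Bool | primeImplicant2 ρ (blockF m)} := by
    rintro _ ⟨c, rfl⟩
    exact rhoOf_prime c
  have hcard : (Set.range (rhoOf (m := m))).ncard = 3 ^ m := by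
    rw [Set.ncard_eq_toFinset_card']
    rw [Set.toFinset_range]
    rw [Finset.card_image_of_injective _ rhoOf_inj]
    simp [Fintype.card_fun]
  calc 3 ^ m = (Set.range (rhoOf (m := m))).ncard := hcard.symm
    _ ≤ _ := Set.ncard_le_ncard hsub (Set.toFinite _)
end

section
/- Let F be a 2-CNF with loopless implication digraph D(F), let ρ be an implicant of F, and suppose a fixed assignment to the variables on cycles of D(F) is given. If u is a literal not on any cycle such that all out-neighbors and in-neighbors of u in D(F) are literals on cycles, then the value of u under any prime implicant extending the fixed cycle-variable assignment is uniquely determined: u is 0 if it has an out-neighbor set to 0, u is 1 if it has an in-neighbor set to 1, and u is free otherwise. -/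
variable {V : Type*}

section Helpers

variable [DecidableEq V] {F : CNF2 V} {ρ : V → Option Bool}

lemma negLit_negLit (l : Lit V) : negLit (negLit l) = l := by simp [negLit]

lemma evalLit_negLit (α : V → Bool) (l : Lit V) :
    evalLit α (negLit l) = !(evalLit α l) := by
  cases h : α l.1 <;> cases hb : l.2 <;> simp [evalLit, negLit, h, hb]

lemma litVal_negLit (l : Lit V) :
    litVal ρ (negLit l) = (litVal ρ l).map (!·) := by
  cases h : ρ l.1 with
  | none => simp [litVal, negLit, h]
  | some b => cases b <;> cases hb : l.2 <;> simp [litVal, negLit, h, hb]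

lemma litVal_none_iff (l : Lit V) : litVal ρ l = none ↔ ρ l.1 = none := by
  cases h : ρ l.1 <;> simp [litVal, h]

lemma edge_skew {l l' : Lit V} (h : edge F l l') : edge F (negLit l') (negLit l) := by
  obtain ⟨c, hc, h⟩ := h
  refine ⟨c, hc, ?_⟩
  rcases h with ⟨h1, h2⟩ | ⟨h1, h2⟩
  · exact Or.inr ⟨by rw [h2], by rw [h1, negLit_negLit]⟩
  · exact Or.inl ⟨by rw [h2], by rw [h1, negLit_negLit]⟩

lemma impliesL_skew {l l' : Lit V} (h : impliesL F l l') :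
    impliesL F (negLit l') (negLit l) := by
  induction h with
  | single h => exact Relation.TransGen.single (edge_skew h)
  | tail _ h ih => exact Relation.TransGen.head (edge_skew h) ih

lemma onCycle_negLit {l : Lit V} (h : onCycle F (negLit l)) : onCycle F l := by
  have := impliesL_skew h
  rwa [negLit_negLit] at this

lemma extendsR_default : extendsR (fun v => (ρ v).getD false) ρ := by
  intro v b h; simp [h]

lemma forced_true {l : Lit V}
    (h : ∀ α, extendsR α ρ → evalLit α l = true) : litVal ρ l = some true := by
  cases hv : ρ l.1 with
  | none =>
    exfalso
    set α : V → Bool := fun v => if v = l.1 then !l.2 else (ρ v).getD false with hα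
    have hext : extendsR α ρ := by
      intro v b hb
      by_cases hvl : v = l.1
      · rw [hvl] at hb; rw [hv] at hb; exact absurd hb (by simp)
      · simp [hα, hvl, hb]
    have := h α hext
    simp [evalLit, hα] at this
  | some b =>
    have := h _ extendsR_default
    simp [evalLit, hv] at this
    simp [litVal, hv, this]

lemma eval_of_litVal_true {α : V → Bool} {l : Lit V} (hext : extendsR α ρ)
    (h : litVal ρ l = some true) : evalLit α l = true := by
  cases hv : ρ l.1 with
  | none => simp [litVal, hv] at h
  | some b =>
    simp [litVal, hv] at h
    simp [evalLit, hext _ _ hv, h]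

lemma forceTrue (himp : implicant2 ρ F) {l l' : Lit V} (he : edge F l l')
    (h : litVal ρ l = some true) : litVal ρ l' = some true := by
  apply forced_true
  intro α hext
  obtain ⟨c, hc, hcase⟩ := he
  have hsat := himp α hext c hc
  have hlt : evalLit α l = true := eval_of_litVal_true hext h
  have hneg : evalLit α (negLit l) = false := by rw [evalLit_negLit, hlt]; rfl
  rcases hcase with ⟨h1, h2⟩ | ⟨h1, h2⟩
  · rw [h1, negLit_negLit] at hneg
    rcases hsat with hs | hs
    · rw [hneg] at hs; exact absurd hs (by simp)
    · rwa [h2]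
  · rw [h1, negLit_negLit] at hneg
    rcases hsat with hs | hs
    · rwa [h2]
    · rw [hneg] at hs; exact absurd hs (by simp)

lemma forceFalse (himp : implicant2 ρ F) {l l' : Lit V} (he : edge F l l')
    (h : litVal ρ l' = some false) : litVal ρ l = some false := by
  have h' : litVal ρ (negLit l') = some true := by
    rw [litVal_negLit, h]; rfl
  have := forceTrue himp (edge_skew he) h'
  rw [litVal_negLit] at this
  cases hv : litVal ρ l with
  | none => rw [hv] at this; simp at this
  | some b => rw [hv] at this; cases b <;> simp_all

lemma forceTrue' (himp : implicant2 ρ F) (hl : looplessD F) {l l' : Lit V}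
    (he : edge F l l') (h : litVal ρ l = none) : litVal ρ l' = some true := by
  rw [litVal_none_iff] at h
  by_cases hv : l'.1 = l.1
  · exfalso
    have : l' = l ∨ l' = negLit l := by
      rcases l with ⟨x, b⟩; rcases l' with ⟨y, c⟩
      simp only at hv; subst hv
      rcases Bool.eq_or_eq_not c b with h | h <;> [left; right] <;> simp [negLit, h]
    rcases this with heq | heq
    · rw [heq] at he; exact hl l he
    · rw [heq] at he
      -- clause is (negLit l, negLit l); extension with l true violates it
      obtain ⟨c, hc, hcase⟩ := he
      set α : V → Bool := fun v => if v = l.1 then l.2 else (ρ v).getD false with hα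
      have hext : extendsR α ρ := by
        intro v b hb
        by_cases hvl : v = l.1
        · rw [hvl, h] at hb; exact absurd hb (by simp)
        · simp [hα, hvl, hb]
      have hsat := himp α hext c hc
      have h1 : evalLit α l = true := by simp [evalLit, hα]
      have hneg : evalLit α (negLit l) = false := by rw [evalLit_negLit, h1]; rfl
      rcases hcase with ⟨e1, e2⟩ | ⟨e1, e2⟩
      · have hc1 : c.1 = negLit l := by rw [← negLit_negLit c.1, ← e1]
        have hc2 : c.2 = negLit l := e2.symm
        rw [hc1, hc2, hneg] at hsat
        simp at hsat
      · have hc2 : c.2 = negLit l := by rw [← negLit_negLit c.2, ← e1]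
        have hc1 : c.1 = negLit l := e2.symm
        rw [hc1, hc2, hneg] at hsat
        simp at hsat
  · by_contra hne
    obtain ⟨c, hc, hcase⟩ := he
    set α : V → Bool := fun v => if v = l.1 then l.2 else if v = l'.1 then !l'.2 else (ρ v).getD false with hα
    have hext : extendsR α ρ := by
      intro v b hb
      by_cases hvl : v = l.1
      · rw [hvl, h] at hb; exact absurd hb (by simp)
      · by_cases hvl' : v = l'.1
        · subst hvl'
          have : litVal ρ l' = some (b == l'.2) := by simp [litVal, hb]
          have hbne : (b == l'.2) = false := by
            by_contra hbt
            exact hne (by rw [this, Bool.of_not_eq_false hbt])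
          have : b = !l'.2 := by
            cases b <;> cases hb2 : l'.2 <;> simp_all
          simp [hα, hvl, this]
        · simp [hα, hvl, hvl', hb]
    have hsat := himp α hext c hc
    have h1 : evalLit α l = true := by simp [evalLit, hα]
    have hneg : evalLit α (negLit l) = false := by rw [evalLit_negLit, h1]; rfl
    have h2 : evalLit α l' = false := by simp [evalLit, hα, hv]
    rcases hcase with ⟨e1, e2⟩ | ⟨e1, e2⟩
    · have hc1 : c.1 = negLit l := by rw [← negLit_negLit c.1, ← e1]
      rw [hc1, hneg, ← e2, h2] at hsat; simp at hsat
    · have hc2 : c.2 = negLit l := by rw [← negLit_negLit c.2, ← e1]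
      rw [hc2, hneg, ← e2, h2] at hsat; simp at hsat

lemma reflTransTrue (himp : implicant2 ρ F) {l l' : Lit V}
    (h : Relation.ReflTransGen (edge F) l l') (hv : litVal ρ l = some true) :
    litVal ρ l' = some true := by
  induction h with
  | refl => exact hv
  | tail _ he ih => exact forceTrue himp he ih

lemma cycleFixed (himp : implicant2 ρ F) (hl : looplessD F) {v : Lit V}
    (h : onCycle F v) : litVal ρ v ≠ none := by
  intro hnone
  have h : Relation.TransGen (edge F) v v := h
  rw [Relation.TransGen.head'_iff] at h
  obtain ⟨w, he, hpath⟩ := h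
  have hw : litVal ρ w = some true := forceTrue' himp hl he hnone
  have := reflTransTrue himp hpath hw
  rw [hnone] at this; exact absurd this (by simp)

end Helpers

lemma litVal_true_of_neg_false [DecidableEq V] {ρ : V → Option Bool} {l : Lit V}
    (h : litVal ρ (negLit l) = some false) : litVal ρ l = some true := by
  rw [litVal_negLit] at h
  cases hv : litVal ρ l with
  | none => rw [hv] at h; simp at h
  | some b => rw [hv] at h; cases b <;> simp_all

lemma lit_eq_or_neg {l u : Lit V} (h : l.1 = u.1) : l = u ∨ l = negLit u := by
  rcases l with ⟨x, b⟩; rcases u with ⟨y, c⟩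
  simp only at h; subst h
  rcases Bool.eq_or_eq_not b c with h | h <;> [left; right] <;> simp [negLit, h]

theorem boundary_literal_determined [DecidableEq V] (F : CNF2 V) (hl : looplessD F)
    (ρ : V → Option Bool) (hρ : primeImplicant2 ρ F)
    (u : Lit V) (hu : ¬ onCycle F u)
    (hout : ∀ v, edge F u v → onCycle F v) (hin : ∀ w, edge F w u → onCycle F w) :
    ((∃ v, edge F u v ∧ litVal ρ v = some false) → litVal ρ u = some false) ∧
    ((∃ w, edge F w u ∧ litVal ρ w = some true) → litVal ρ u = some true) ∧
    ((¬ ∃ v, edge F u v ∧ litVal ρ v = some false) →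
     (¬ ∃ w, edge F w u ∧ litVal ρ w = some true) → litVal ρ u = none) := by
  have himp := hρ.1
  refine ⟨?_, ?_, ?_⟩
  · rintro ⟨v, he, hv⟩; exact forceFalse himp he hv
  · rintro ⟨w, he, hw⟩; exact forceTrue himp he hw
  · intro h1 h2
    push_neg at h1 h2
    by_contra hne
    obtain ⟨a, hv⟩ : ∃ a, ρ u.1 = some a := by
      cases h : ρ u.1 with
      | none => exact absurd ((litVal_none_iff u).mpr h) hne
      | some a => exact ⟨a, rfl⟩
    apply hρ.2 u.1 (by simp [hv])
    intro α hα
    have keyOut : ∀ m, edge F u m → m.1 ≠ u.1 ∧ litVal ρ m = some true := by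
      intro m he
      have hcyc := hout m he
      have hm : m.1 ≠ u.1 := by
        intro h
        rcases lit_eq_or_neg h with heq | heq
        · rw [heq] at he; exact hl u he
        · rw [heq] at hcyc; exact hu (onCycle_negLit hcyc)
      refine ⟨hm, ?_⟩
      cases h : litVal ρ m with
      | none => exact absurd h (cycleFixed himp hl hcyc)
      | some b =>
        cases b with
        | false => exact absurd h (h1 m he)
        | true => rfl
    have keyIn : ∀ w, edge F w u → w.1 ≠ u.1 ∧ litVal ρ w = some false := by
      intro w he
      have hcyc := hin w he
      have hw : w.1 ≠ u.1 := by
        intro h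
        rcases lit_eq_or_neg h with heq | heq
        · rw [heq] at he; exact hl u he
        · rw [heq] at hcyc; exact hu (onCycle_negLit hcyc)
      refine ⟨hw, ?_⟩
      cases h : litVal ρ w with
      | none => exact absurd h (cycleFixed himp hl hcyc)
      | some b =>
        cases b with
        | false => rfl
        | true => exact absurd h (h2 w he)
    have evalKey : ∀ m : Lit V, m.1 ≠ u.1 → litVal ρ m = some true → evalLit α m = true := by
      intro m hm h
      cases hb : ρ m.1 with
      | none => simp [litVal, hb] at h
      | some b =>
        simp [litVal, hb] at h
        have : unfix ρ u.1 m.1 = some b := by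
          rw [unfix, Function.update_of_ne hm, hb]
        simp [evalLit, hα _ _ this, h]
    intro c hc
    have e1 : edge F (negLit c.1) c.2 := ⟨c, hc, Or.inl ⟨rfl, rfl⟩⟩
    have e2 : edge F (negLit c.2) c.1 := ⟨c, hc, Or.inr ⟨rfl, rfl⟩⟩
    by_cases hp : c.1.1 = u.1
    · rcases lit_eq_or_neg hp with hcu | hcu
      · rw [hcu] at e2
        obtain ⟨hne2, hval⟩ := keyIn _ e2
        have hq1 : c.2.1 ≠ u.1 := by simpa [negLit] using hne2
        exact Or.inr (evalKey _ hq1 (litVal_true_of_neg_false hval))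
      · have hnc : negLit c.1 = u := by rw [hcu, negLit_negLit]
        rw [hnc] at e1
        obtain ⟨hne2, hval⟩ := keyOut _ e1
        exact Or.inr (evalKey _ hne2 hval)
    · by_cases hq : c.2.1 = u.1
      · rcases lit_eq_or_neg hq with hcu | hcu
        · rw [hcu] at e1
          obtain ⟨hne1, hval⟩ := keyIn _ e1
          have hp1 : c.1.1 ≠ u.1 := by simpa [negLit] using hne1
          exact Or.inl (evalKey _ hp1 (litVal_true_of_neg_false hval))
        · have hnc : negLit c.2 = u := by rw [hcu, negLit_negLit]
          rw [hnc] at e2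
          obtain ⟨hne1, hval⟩ := keyOut _ e2
          exact Or.inl (evalKey _ hne1 hval)
      · have hext' : extendsR (Function.update α u.1 a) ρ := by
          intro v b hb
          by_cases hvu : v = u.1
          · subst hvu
            rw [hv] at hb
            injection hb with hb
            simp [hb]
          · rw [Function.update_of_ne hvu]
            exact hα v b (by rw [unfix, Function.update_of_ne hvu, hb])
        have hsat := himp _ hext' c hc
        have ha1 : evalLit (Function.update α u.1 a) c.1 = evalLit α c.1 := by
          simp [evalLit, Function.update_of_ne hp]
        have ha2 : evalLit (Function.update α u.1 a) c.2 = evalLit α c.2 := by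
          simp [evalLit, Function.update_of_ne hq]
        rcases hsat with hs | hs
        · exact Or.inl (ha1 ▸ hs)
        · exact Or.inr (ha2 ▸ hs)
end
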